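/- If G is an r-graph and S is a barrier of size greater than 1 such that every component of G−S is a single vertex, then G is bipartite. -/

import Mathlib

/-- A multigraph on vertex type `V` with edge type `E`: each edge has a pair of endpoints. -/
structure Multigraph (V E : Type) where
  ends : E → Sym2 V

namespace Multigraph

variable {V E : Type}

/-- No loops: no edge has equal endpoints. -/
def Loopless (G : Multigraph V E) : Prop := ∀ e, ¬ (G.ends e).IsDiag

/-- The degree of a vertex: the number of edges incident with it. -/
noncomputable def degree (G : Multigraph V E) (v : V) : ℕ := Nat.card {e | v ∈ G.ends e}

/-- The edge cut `∂(X)`: edges with exactly one end in `X`. -/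
def cut (G : Multigraph V E) (X : Set V) : Set E :=
  {e | ∃ u ∈ X, ∃ w ∉ X, G.ends e = s(u, w)}

/-- The underlying simple graph. -/
def toSimple (G : Multigraph V E) : SimpleGraph V where
  Adj u w := u ≠ w ∧ ∃ e, G.ends e = s(u, w)
  symm := by
    constructor
    rintro u w ⟨h, e, he⟩
    exact ⟨h.symm, e, by rw [he, Sym2.eq_swap]⟩
  loopless := by constructor; rintro u ⟨h, _⟩; exact h rfl

/-- Connectivity of a multigraph. -/
def Connected (G : Multigraph V E) : Prop := G.toSimple.Connected

/-- `M` is a perfect matching on the vertex set `A`: every edge of `M` has both ends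
in `A` and every vertex of `A` is covered by exactly one edge of `M`. -/
def IsPerfectMatchingOn (G : Multigraph V E) (A : Set V) (M : Set E) : Prop :=
  (∀ e ∈ M, ∀ v ∈ G.ends e, v ∈ A) ∧ ∀ v ∈ A, ∃! e, e ∈ M ∧ v ∈ G.ends e

/-- A perfect matching of `G`. -/
def IsPerfectMatching (G : Multigraph V E) (M : Set E) : Prop :=
  G.IsPerfectMatchingOn Set.univ M

/-- `θ(G−S)`: the number of odd components of `G − S`. -/
noncomputable def theta (G : Multigraph V E) (S : Set V) : ℕ :=
  Nat.card {c : (G.toSimple.induce Sᶜ).ConnectedComponent // Odd (Nat.card c.supp)}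

/-- A barrier: a vertex set `S` with `θ(G−S) = |S|`. -/
def IsBarrier (G : Multigraph V E) (S : Set V) : Prop := G.theta S = Nat.card S

/-- Bi-critical: deleting any two distinct vertices leaves a graph with a perfect matching. -/
def Bicritical (G : Multigraph V E) : Prop :=
  ∀ u v : V, u ≠ v → ∃ M, G.IsPerfectMatchingOn {u, v}ᶜ M

/-- Bipartite multigraph. -/
def Bipartite (G : Multigraph V E) : Prop := G.toSimple.Colorable 2

/-- `k`-vertex-connected: deleting fewer than `k` vertices leaves a connected graph. -/
def VertexConnected (G : Multigraph V E) (k : ℕ) : Prop :=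
  ∀ S : Set V, Nat.card S < k → (G.toSimple.induce Sᶜ).Connected

/-- A brick: non-bipartite, bi-critical and 3-vertex-connected. -/
def IsBrick (G : Multigraph V E) : Prop :=
  ¬ G.Bipartite ∧ G.Bicritical ∧ G.VertexConnected 3

/-- A proper edge coloring with `k` colors exists. -/
def EdgeColorable (G : Multigraph V E) (k : ℕ) : Prop :=
  ∃ c : E → Fin k, ∀ e f, e ≠ f → (∃ v, v ∈ G.ends e ∧ v ∈ G.ends f) → c e ≠ c f

/-- A non-trivial odd vertex set: odd cardinality, different from `1` and `|V|−1`. -/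
def NontrivialOdd (_G : Multigraph V E) (X : Set V) : Prop :=
  Odd (Nat.card X) ∧ Nat.card X ≠ 1 ∧ Nat.card X ≠ Nat.card V - 1

/-- An `r`-graph: a loopless `r`-regular multigraph in which every odd vertex set
has at least `r` edges leaving it. -/
def IsRGraph (G : Multigraph V E) (r : ℕ) : Prop :=
  G.Loopless ∧ (∀ v, G.degree v = r) ∧
    ∀ X : Set V, Odd (Nat.card X) → r ≤ Nat.card (G.cut X)

end Multigraph

/-- If G is an r-graph and S is a barrier of size greater than 1 such that
every component of G − S is a single vertex, then G is bipartite. -/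
theorem barrier_singletons_bipartite {V E : Type} [Fintype V] [Fintype E]
    (G : Multigraph V E) (r : ℕ) (hG : G.IsRGraph r)
    (S : Set V) (hS : G.IsBarrier S) (hcard : 1 < Nat.card S)
    (hsingle : ∀ c : (G.toSimple.induce Sᶜ).ConnectedComponent, Nat.card c.supp = 1) :
    G.Bipartite := by
  classical
  -- Every edge has at least one end in S (components of G-S are singletons).
  have hnoSc : ∀ e : E, ∃ v ∈ S, v ∈ G.ends e := by
    intro e
    obtain ⟨⟨u, w⟩, h⟩ := Quot.exists_rep (G.ends e)
    have h : G.ends e = s(u, w) := h.symm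
    by_contra h'
    push_neg at h'
    have hu : u ∉ S := fun hu => h' u hu (by rw [h]; exact Sym2.mem_mk_left u w)
    have hw : w ∉ S := fun hw => h' w hw (by rw [h]; exact Sym2.mem_mk_right u w)
    have hne : u ≠ w := by
      intro hE
      exact hG.1 e (by rw [h, hE]; exact Sym2.mk_isDiag_iff.mpr rfl)
    have hadj : (G.toSimple.induce Sᶜ).Adj ⟨u, hu⟩ ⟨w, hw⟩ := ⟨hne, e, h⟩
    set c := (G.toSimple.induce Sᶜ).connectedComponentMk ⟨u, hu⟩ with hc
    have h1 : (⟨u, hu⟩ : ↥Sᶜ) ∈ c.supp := rfl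
    have h2 : (⟨w, hw⟩ : ↥Sᶜ) ∈ c.supp := by
      rw [SimpleGraph.ConnectedComponent.mem_supp_iff]
      exact (SimpleGraph.ConnectedComponent.sound hadj.reachable).symm
    have hsub := (Nat.card_eq_one_iff_unique.mp (hsingle c)).1
    have h3 : (⟨⟨u, hu⟩, h1⟩ : c.supp) = ⟨⟨w, hw⟩, h2⟩ := Subsingleton.elim _ _
    have h4 : (⟨u, hu⟩ : ↥Sᶜ) = ⟨w, hw⟩ := congrArg Subtype.val h3
    exact hne (congrArg Subtype.val h4)
  -- |Sᶜ| = |S|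
  have hScS : Nat.card ↥(Sᶜ) = Nat.card S := by
    have hbij : Function.Bijective
        (G.toSimple.induce Sᶜ).connectedComponentMk := by
      constructor
      · intro x y hxy
        set c := (G.toSimple.induce Sᶜ).connectedComponentMk x with hc
        have h1 : x ∈ c.supp := rfl
        have h2 : y ∈ c.supp := by
          rw [SimpleGraph.ConnectedComponent.mem_supp_iff]; exact hxy.symm
        have hsub := (Nat.card_eq_one_iff_unique.mp (hsingle c)).1
        have : (⟨x, h1⟩ : c.supp) = ⟨y, h2⟩ := Subsingleton.elim _ _
        exact congrArg Subtype.val this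
      · exact fun c => c.exists_rep
    have h1 : Nat.card ↥(Sᶜ) =
        Nat.card (G.toSimple.induce Sᶜ).ConnectedComponent :=
      Nat.card_eq_of_bijective _ hbij
    have h2 : G.theta S =
        Nat.card (G.toSimple.induce Sᶜ).ConnectedComponent :=
      Nat.card_congr (Equiv.subtypeUnivEquiv (fun c => by
        rw [hsingle c]; exact odd_one))
    rw [h1, ← h2, hS]
  -- degree as a Finset card
  have hdeg : ∀ v : V, (Finset.univ.filter fun e => v ∈ G.ends e).card = r := by
    intro v
    have := hG.2.1 v
    rw [Multigraph.degree, Nat.card_eq_fintype_card, Fintype.card_subtype] at this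
    exact this
  set A : Finset V := S.toFinset with hAdef
  have hAcard : A.card = Nat.card S := by
    rw [Nat.card_eq_fintype_card, Set.toFinset_card]
  have hAccard : Aᶜ.card = Nat.card ↥(Sᶜ) := by
    rw [hAdef, ← Set.toFinset_compl, Nat.card_eq_fintype_card, Set.toFinset_card]
  -- double counting
  have key : ∀ X : Finset V,
      X.card * r = ∑ e : E, (X.filter fun v => v ∈ G.ends e).card := by
    intro X
    calc X.card * r = ∑ _v ∈ X, r := by rw [Finset.sum_const, smul_eq_mul]
      _ = ∑ v ∈ X, (Finset.univ.filter fun e => v ∈ G.ends e).card :=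
        (Finset.sum_congr rfl fun v _ => (hdeg v).symm)
      _ = ∑ v ∈ X, ∑ e : E, if v ∈ G.ends e then 1 else 0 :=
        (Finset.sum_congr rfl fun v _ => Finset.card_filter _ _)
      _ = ∑ e : E, ∑ v ∈ X, if v ∈ G.ends e then 1 else 0 := Finset.sum_comm
      _ = ∑ e : E, (X.filter fun v => v ∈ G.ends e).card :=
        (Finset.sum_congr rfl fun e _ => (Finset.card_filter _ _).symm)
  -- each edge has exactly two ends
  have hsplit : ∀ e : E,
      (A.filter fun v => v ∈ G.ends e).card
        + (Aᶜ.filter fun v => v ∈ G.ends e).card = 2 := by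
    intro e
    obtain ⟨⟨u, w⟩, h⟩ := Quot.exists_rep (G.ends e)
    have h : G.ends e = s(u, w) := h.symm
    have hne : u ≠ w := by
      intro hE
      exact hG.1 e (by rw [h, hE]; exact Sym2.mk_isDiag_iff.mpr rfl)
    have hT : (Finset.univ.filter fun v => v ∈ G.ends e) = {u, w} := by
      ext v; simp [h, Sym2.mem_iff]
    have e1 : (A.filter fun v => v ∈ G.ends e)
        = (Finset.univ.filter fun v => v ∈ G.ends e).filter (fun v => v ∈ A) := by
      ext v; simp [Finset.mem_filter, and_comm]
    have e2 : (Aᶜ.filter fun v => v ∈ G.ends e)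
        = (Finset.univ.filter fun v => v ∈ G.ends e).filter (fun v => ¬ v ∈ A) := by
      ext v; simp [Finset.mem_filter, and_comm]
    rw [e1, e2, Finset.card_filter_add_card_filter_not, hT,
      Finset.card_pair hne]
  have hlow : ∀ e : E, 1 ≤ (A.filter fun v => v ∈ G.ends e).card := by
    intro e
    obtain ⟨v, hvS, hve⟩ := hnoSc e
    exact Finset.card_pos.mpr ⟨v, Finset.mem_filter.mpr
      ⟨by rw [hAdef]; exact Set.mem_toFinset.mpr hvS, hve⟩⟩
  -- sum equalities
  have hsum1 : ∑ e : E, (A.filter fun v => v ∈ G.ends e).card = A.card * r :=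
    (key A).symm
  have hsum2 : ∑ e : E, (Aᶜ.filter fun v => v ∈ G.ends e).card = A.card * r := by
    rw [← key Aᶜ, hAccard, hScS, hAcard]
  have htwo : ∑ e : E, (2 : ℕ) = 2 * (A.card * r) := by
    calc ∑ e : E, (2 : ℕ)
        = ∑ e : E, ((A.filter fun v => v ∈ G.ends e).card
          + (Aᶜ.filter fun v => v ∈ G.ends e).card) :=
          (Finset.sum_congr rfl fun e _ => (hsplit e).symm)
      _ = 2 * (A.card * r) := by rw [Finset.sum_add_distrib, hsum1, hsum2]; ring
  have hEcard : ∑ e : E, (1 : ℕ) = A.card * r := by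
    have h2 : ∑ e : E, (2 : ℕ) = 2 * ∑ e : E, (1 : ℕ) := by
      rw [Finset.mul_sum]; simp
    omega
  -- equality case: every edge has exactly one end in S
  have hone : ∀ e : E, (A.filter fun v => v ∈ G.ends e).card = 1 := by
    intro e
    have := (Finset.sum_eq_sum_iff_of_le (fun e _ => hlow e)).mp
      (by rw [hEcard, hsum1]) e (Finset.mem_univ e)
    exact this.symm
  -- build the coloring
  refine ⟨SimpleGraph.Coloring.mk (fun v => if v ∈ S then 0 else 1) ?_⟩
  rintro u w ⟨hne, e, h⟩
  have hmu : u ∈ G.ends e := by rw [h]; exact Sym2.mem_mk_left u w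
  have hmw : w ∈ G.ends e := by rw [h]; exact Sym2.mem_mk_right u w
  have hnotboth : ¬ (u ∈ S ∧ w ∈ S) := by
    rintro ⟨hu, hw⟩
    have hsub : ({u, w} : Finset V) ⊆ A.filter fun v => v ∈ G.ends e := by
      intro v hv
      rcases Finset.mem_insert.mp hv with rfl | hv
      · exact Finset.mem_filter.mpr ⟨Set.mem_toFinset.mpr hu, hmu⟩
      · rcases Finset.mem_singleton.mp hv with rfl
        exact Finset.mem_filter.mpr ⟨Set.mem_toFinset.mpr hw, hmw⟩
    have := Finset.card_le_card hsub
    rw [Finset.card_pair hne, hone e] at this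
    omega
  have hnotnone : ¬ (u ∉ S ∧ w ∉ S) := by
    rintro ⟨hu, hw⟩
    have hempty : (A.filter fun v => v ∈ G.ends e) = ∅ := by
      rw [Finset.eq_empty_iff_forall_notMem]
      intro v hv
      obtain ⟨hvA, hve⟩ := Finset.mem_filter.mp hv
      have hvS : v ∈ S := Set.mem_toFinset.mp hvA
      rw [h, Sym2.mem_iff] at hve
      rcases hve with rfl | rfl
      · exact hu hvS
      · exact hw hvS
    have := hone e
    rw [hempty] at this
    simp at this
  by_cases hu : u ∈ S <;> by_cases hw : w ∈ S <;>
    simp_all
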